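/- For every κ ∈ (0, 1/2) and every κ̄ ∈ (0, κ/2) there exists a constant C > 0 such that for every x ∈ ℝ³, all 0 < ε ≤ λ ≤ 1 and every ψ : ℝ³ → ℝ which is Lipschitz with Lipschitz constant at most 1, satisfies ‖ψ‖_∞ ≤ 1 and has support in the closed unit ball, one has ∫_λ^1 ∫_{ℝ³} δ^{-3/2-κ̄} ( sup_{η ∈ 𝒩} | ∫_{ℝ³} Ψ_ε^λ(v) η_u^δ(v) dv | ) du dδ ≤ C λ^{-1/2-κ} ε^{κ−2κ̄}. -/

import Mathlib

open MeasureTheory Set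

/-- The grid cube `□_ε^y = {z : z - y ∈ [-ε/2, ε/2)³}` of side `ε` centred at `y`. -/
def gridCube (ε : ℝ) (y : EuclideanSpace ℝ (Fin 3)) : Set (EuclideanSpace ℝ (Fin 3)) :=
  {z | ∀ i : Fin 3, z i - y i ∈ Ico (-(ε / 2)) (ε / 2)}

/-- `latticeOf ε v` is the unique point `y ∈ εℤ³` with `v ∈ □_ε^y`. -/
noncomputable def latticeOf (ε : ℝ) (v : EuclideanSpace ℝ (Fin 3)) :
    EuclideanSpace ℝ (Fin 3) :=
  (EuclideanSpace.equiv (Fin 3) ℝ).symm fun i => ε * (⌊v i / ε + 1 / 2⌋ : ℤ)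

/-- The rescaled and recentred test function `f_x^λ(z) = λ⁻³ f((z - x)/λ)`. -/
noncomputable def scaledTest (f : EuclideanSpace ℝ (Fin 3) → ℝ)
    (x : EuclideanSpace ℝ (Fin 3)) (lam : ℝ) : EuclideanSpace ℝ (Fin 3) → ℝ :=
  fun z => (lam ^ 3)⁻¹ * f (lam⁻¹ • (z - x))

/-- `Ψ_ε^λ(v) = ψ_x^λ(v) - ε⁻³ ∫_{□_ε^{y_ε(v)}} ψ_x^λ(z) dz`, the difference between `ψ_x^λ`
and its average over the `ε`-grid cube containing the argument. -/
noncomputable def PsiDiff (ψ : EuclideanSpace ℝ (Fin 3) → ℝ)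
    (x : EuclideanSpace ℝ (Fin 3)) (lam ε : ℝ) : EuclideanSpace ℝ (Fin 3) → ℝ :=
  fun v => scaledTest ψ x lam v
    - (ε ^ 3)⁻¹ * ∫ z in gridCube ε (latticeOf ε v), scaledTest ψ x lam z

/-- The set `𝒩` of bounded measurable test functions supported in the closed Euclidean unit
ball and bounded by 1. -/
def testSet : Set (EuclideanSpace ℝ (Fin 3) → ℝ) :=
  {η | Measurable η ∧ (∀ v, |η v| ≤ 1) ∧ Function.support η ⊆ Metric.closedBall 0 1}

/-- The subset `𝒩₀ ⊆ 𝒩` of mean-zero test functions. -/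
def testSetZero : Set (EuclideanSpace ℝ (Fin 3) → ℝ) :=
  {η ∈ testSet | (∫ v, η v) = 0}


-- membership
lemma mem_gridCube_self {ε : ℝ} (hε : 0 < ε) (v : EuclideanSpace ℝ (Fin 3)) :
    v ∈ gridCube ε (latticeOf ε v) := by
  intro i
  have h1 : (⌊v i / ε + 1 / 2⌋ : ℝ) ≤ v i / ε + 1 / 2 := Int.floor_le _
  have h2 : v i / ε + 1 / 2 < ⌊v i / ε + 1 / 2⌋ + 1 := Int.lt_floor_add_one _
  have hlat : latticeOf ε v i = ε * (⌊v i / ε + 1 / 2⌋ : ℤ) := rfl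
  rw [hlat]
  have hvi : v i = ε * (v i / ε) := by field_simp
  constructor
  · nlinarith [mul_le_mul_of_nonneg_left h1 hε.le]
  · nlinarith [mul_lt_mul_of_pos_left h2 hε]

lemma dist_le_of_mem_gridCube {ε : ℝ} (hε : 0 < ε) {y z v : EuclideanSpace ℝ (Fin 3)}
    (hz : z ∈ gridCube ε y) (hv : v ∈ gridCube ε y) : dist z v ≤ 2 * ε := by
  rw [EuclideanSpace.dist_eq]
  have : ∑ i : Fin 3, dist (z i) (v i) ^ 2 ≤ (2 * ε) ^ 2 := by
    have h : ∀ i : Fin 3, dist (z i) (v i) ^ 2 ≤ ε ^ 2 := by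
      intro i
      obtain ⟨hz1, hz2⟩ := hz i
      obtain ⟨hv1, hv2⟩ := hv i
      rw [Real.dist_eq]
      rw [sq_abs]
      nlinarith
    calc ∑ i : Fin 3, dist (z i) (v i) ^ 2 ≤ ∑ _i : Fin 3, ε ^ 2 :=
          Finset.sum_le_sum fun i _ => h i
      _ = 3 * ε ^ 2 := by simp
      _ ≤ (2 * ε) ^ 2 := by nlinarith
  calc Real.sqrt (∑ i : Fin 3, dist (z i) (v i) ^ 2) ≤ Real.sqrt ((2 * ε) ^ 2) :=
        Real.sqrt_le_sqrt this
    _ = 2 * ε := Real.sqrt_sq (by positivity)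

lemma gridCube_eq_preimage (ε : ℝ) (y : EuclideanSpace ℝ (Fin 3)) :
    gridCube ε y = (MeasurableEquiv.toLp 2 (Fin 3 → ℝ)).symm ⁻¹'
      (univ.pi fun i => Ico (y i - ε / 2) (y i + ε / 2)) := by
  ext z
  simp only [gridCube, mem_setOf_eq, mem_preimage, mem_pi, mem_univ, forall_true_left, mem_Ico,
    MeasurableEquiv.toLp_symm_apply]
  constructor <;> intro h i <;> (obtain ⟨h1, h2⟩ := h i; exact ⟨by linarith, by linarith⟩)

lemma measurableSet_gridCube (ε : ℝ) (y : EuclideanSpace ℝ (Fin 3)) :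
    MeasurableSet (gridCube ε y) := by
  rw [gridCube_eq_preimage]
  exact (MeasurableSet.univ_pi fun i => measurableSet_Ico).preimage
    (MeasurableEquiv.toLp 2 (Fin 3 → ℝ)).symm.measurable

lemma volume_gridCube {ε : ℝ} (hε : 0 ≤ ε) (y : EuclideanSpace ℝ (Fin 3)) :
    volume (gridCube ε y) = ENNReal.ofReal (ε ^ 3) := by
  rw [gridCube_eq_preimage]
  rw [(EuclideanSpace.volume_preserving_symm_measurableEquiv_toLp (Fin 3)).measure_preimage
    ((MeasurableSet.univ_pi fun i => measurableSet_Ico).nullMeasurableSet)]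
  rw [volume_pi_pi]
  simp only [Real.volume_Ico]
  have : ∀ i : Fin 3, y i + ε / 2 - (y i - ε / 2) = ε := fun i => by ring
  simp only [this]
  rw [Finset.prod_const]
  rw [← ENNReal.ofReal_pow hε]
  simp

section
variable {ψ : EuclideanSpace ℝ (Fin 3) → ℝ} {x v z y : EuclideanSpace ℝ (Fin 3)} {lam ε : ℝ}

lemma abs_scaledTest_le (hbd : ∀ z, |ψ z| ≤ 1) (hlam : 0 < lam) (x v) :
    |scaledTest ψ x lam v| ≤ (lam ^ 3)⁻¹ := by
  unfold scaledTest
  rw [abs_mul, abs_inv, abs_pow, abs_of_pos hlam]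
  calc (lam ^ 3)⁻¹ * |ψ (lam⁻¹ • (v - x))| ≤ (lam^3)⁻¹ * 1 :=
        mul_le_mul_of_nonneg_left (hbd _) (by positivity)
    _ = (lam^3)⁻¹ := mul_one _

lemma scaledTest_eq_zero (hsupp : Function.support ψ ⊆ Metric.closedBall 0 1)
    (hlam : 0 < lam) (h : lam < dist v x) : scaledTest ψ x lam v = 0 := by
  unfold scaledTest
  have : ψ (lam⁻¹ • (v - x)) = 0 := by
    by_contra hne
    have hmem := hsupp hne
    rw [Metric.mem_closedBall, dist_zero_right, norm_smul, norm_inv, Real.norm_eq_abs,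
      abs_of_pos hlam] at hmem
    rw [dist_eq_norm] at h
    have : ‖v - x‖ ≤ lam := by
      calc ‖v - x‖ = lam * (lam⁻¹ * ‖v - x‖) := by field_simp
        _ ≤ lam * 1 := mul_le_mul_of_nonneg_left hmem hlam.le
        _ = lam := mul_one _
    linarith
  rw [this, mul_zero]

lemma abs_scaledTest_sub_le (hlip : LipschitzWith 1 ψ) (hlam : 0 < lam) (x v z) :
    |scaledTest ψ x lam v - scaledTest ψ x lam z| ≤ (lam ^ 3)⁻¹ * lam⁻¹ * dist v z := by
  unfold scaledTest
  rw [← mul_sub, abs_mul, abs_inv, abs_pow, abs_of_pos hlam]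
  have hd : |ψ (lam⁻¹ • (v - x)) - ψ (lam⁻¹ • (z - x))| ≤ lam⁻¹ * dist v z := by
    have := hlip.dist_le_mul (lam⁻¹ • (v - x)) (lam⁻¹ • (z - x))
    rw [Real.dist_eq] at this
    calc |ψ (lam⁻¹ • (v - x)) - ψ (lam⁻¹ • (z - x))|
        ≤ 1 * dist (lam⁻¹ • (v - x)) (lam⁻¹ • (z - x)) := this
      _ = lam⁻¹ * dist v z := by
          rw [one_mul, dist_eq_norm, ← smul_sub, norm_smul, norm_inv, Real.norm_eq_abs,
            abs_of_pos hlam, dist_eq_norm]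
          congr 2
          abel
  calc (lam^3)⁻¹ * |ψ (lam⁻¹ • (v - x)) - ψ (lam⁻¹ • (z - x))|
      ≤ (lam^3)⁻¹ * (lam⁻¹ * dist v z) := mul_le_mul_of_nonneg_left hd (by positivity)
    _ = (lam^3)⁻¹ * lam⁻¹ * dist v z := by ring

lemma continuous_scaledTest (hlip : LipschitzWith 1 ψ) :
    Continuous (scaledTest ψ x lam) :=
  continuous_const.mul (hlip.continuous.comp (by fun_prop : Continuous fun z : EuclideanSpace ℝ (Fin 3) => lam⁻¹ • (z - x)))

end

section
variable {ψ : EuclideanSpace ℝ (Fin 3) → ℝ} {x v y : EuclideanSpace ℝ (Fin 3)} {lam ε : ℝ}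

lemma integrableOn_scaledTest (hlip : LipschitzWith 1 ψ) (hbd : ∀ z, |ψ z| ≤ 1)
    (hlam : 0 < lam) (hε : 0 < ε) :
    IntegrableOn (scaledTest ψ x lam) (gridCube ε y) := by
  have hfin : volume (gridCube ε y) < ⊤ := by
    rw [volume_gridCube hε.le]; exact ENNReal.ofReal_lt_top
  haveI : IsFiniteMeasure (volume.restrict (gridCube ε y)) :=
    ⟨by rwa [Measure.restrict_apply_univ]⟩
  refine ⟨(continuous_scaledTest hlip).aestronglyMeasurable.restrict,
    HasFiniteIntegral.of_bounded (C := (lam ^ 3)⁻¹) (ae_of_all _ fun z => ?_)⟩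
  simpa [Real.norm_eq_abs] using abs_scaledTest_le hbd hlam x z

lemma abs_psiDiff_le (hlip : LipschitzWith 1 ψ) (hbd : ∀ z, |ψ z| ≤ 1)
    (hlam : 0 < lam) (hε : 0 < ε) (x v) :
    |PsiDiff ψ x lam ε v| ≤ 2 * ε * ((lam ^ 3)⁻¹ * lam⁻¹) := by
  set s := gridCube ε (latticeOf ε v) with hs
  have hv : v ∈ s := mem_gridCube_self hε v
  have hvol : volume s = ENNReal.ofReal (ε ^ 3) := volume_gridCube hε.le _
  have hfin : volume s < ⊤ := by rw [hvol]; exact ENNReal.ofReal_lt_top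
  have hI : IntegrableOn (scaledTest ψ x lam) s := integrableOn_scaledTest hlip hbd hlam hε
  have hIc : IntegrableOn (fun _ => scaledTest ψ x lam v) s :=
    integrableOn_const hfin.ne
  have key : PsiDiff ψ x lam ε v
      = (ε ^ 3)⁻¹ * ∫ z in s, (scaledTest ψ x lam v - scaledTest ψ x lam z) := by
    rw [integral_sub hIc hI, setIntegral_const, measureReal_def, hvol, ENNReal.toReal_ofReal (by positivity)]
    show scaledTest ψ x lam v - (ε ^ 3)⁻¹ * ∫ z in s, scaledTest ψ x lam z = _
    have hε3 : (ε : ℝ) ^ 3 ≠ 0 := by positivity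
    field_simp
    ring
  rw [key, abs_mul, abs_inv, abs_pow, abs_of_pos hε]
  have hnorm : ‖∫ z in s, (scaledTest ψ x lam v - scaledTest ψ x lam z)‖
      ≤ ((lam ^ 3)⁻¹ * lam⁻¹ * (2 * ε)) * (volume s).toReal := by
    refine norm_setIntegral_le_of_norm_le_const hfin (fun z hz => ?_)
    · rw [Real.norm_eq_abs]
      calc |scaledTest ψ x lam v - scaledTest ψ x lam z|
          ≤ (lam ^ 3)⁻¹ * lam⁻¹ * dist v z := abs_scaledTest_sub_le hlip hlam x v z
        _ ≤ (lam ^ 3)⁻¹ * lam⁻¹ * (2 * ε) := by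
            refine mul_le_mul_of_nonneg_left ?_ (by positivity)
            rw [dist_comm]
            exact dist_le_of_mem_gridCube hε hz hv
  rw [Real.norm_eq_abs] at hnorm
  rw [hvol, ENNReal.toReal_ofReal (by positivity)] at hnorm
  calc (ε ^ 3)⁻¹ * |∫ z in s, (scaledTest ψ x lam v - scaledTest ψ x lam z)|
      ≤ (ε ^ 3)⁻¹ * ((lam ^ 3)⁻¹ * lam⁻¹ * (2 * ε) * ε ^ 3) :=
        mul_le_mul_of_nonneg_left hnorm (by positivity)
    _ = 2 * ε * ((lam ^ 3)⁻¹ * lam⁻¹) := by field_simp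

lemma psiDiff_eq_zero (hsupp : Function.support ψ ⊆ Metric.closedBall 0 1)
    (hlam : 0 < lam) (hε : 0 < ε) (h : lam + 2 * ε < dist v x) :
    PsiDiff ψ x lam ε v = 0 := by
  set s := gridCube ε (latticeOf ε v) with hs
  have hv : v ∈ s := mem_gridCube_self hε v
  have h1 : scaledTest ψ x lam v = 0 :=
    scaledTest_eq_zero hsupp hlam (by nlinarith)
  have h2 : ∫ z in s, scaledTest ψ x lam z = 0 := by
    rw [setIntegral_congr_fun (measurableSet_gridCube _ _)
      (g := fun _ => (0 : ℝ)) (fun z hz => ?_)]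
    · exact integral_zero _ _
    · refine scaledTest_eq_zero hsupp hlam ?_
      have hd : dist z v ≤ 2 * ε := dist_le_of_mem_gridCube hε hz hv
      have := dist_triangle v z x
      have h3 : dist v x ≤ dist z v + dist z x := by
        rw [dist_comm z v] at *
        exact dist_triangle v z x
      linarith
  unfold PsiDiff
  rw [h1, h2, mul_zero, sub_zero]
end

noncomputable def Vr : ℝ := (volume (Metric.ball (0 : EuclideanSpace ℝ (Fin 3)) 1)).toReal

lemma sup_bound {ψ : EuclideanSpace ℝ (Fin 3) → ℝ} {lam ε : ℝ}
    (hlip : LipschitzWith 1 ψ) (hbd : ∀ z, |ψ z| ≤ 1)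
    (hsupp : Function.support ψ ⊆ Metric.closedBall 0 1)
    (hε : 0 < ε) (hεlam : ε ≤ lam) {δ : ℝ} (hδ : lam ≤ δ) (hδ1 : δ ≤ 1)
    (x u : EuclideanSpace ℝ (Fin 3)) :
    (⨆ η ∈ testSet, |∫ v, PsiDiff ψ x lam ε v * scaledTest η u δ v|)
      ≤ (Metric.closedBall x (4 * δ)).indicator
          (fun _ => 54 * Vr * ε * lam⁻¹ * (δ ^ 3)⁻¹) u := by
  have hlam : 0 < lam := lt_of_lt_of_le hε hεlam
  have hδ0 : 0 < δ := lt_of_lt_of_le hlam hδ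
  have hVr : 0 ≤ Vr := ENNReal.toReal_nonneg
  have hM : 0 ≤ 54 * Vr * ε * lam⁻¹ * (δ ^ 3)⁻¹ := by positivity
  have hB : 0 ≤ (Metric.closedBall x (4 * δ)).indicator
      (fun _ => 54 * Vr * ε * lam⁻¹ * (δ ^ 3)⁻¹) u :=
    indicator_nonneg (fun _ _ => hM) u
  refine Real.iSup_le (fun η => Real.iSup_le (fun hη => ?_) hB) hB
  obtain ⟨hηm, hηbd, hηsupp⟩ := hη
  by_cases hu : u ∈ Metric.closedBall x (4 * δ)
  · rw [indicator_of_mem hu]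
    set c : ℝ := 2 * ε * ((lam ^ 3)⁻¹ * lam⁻¹) * (δ ^ 3)⁻¹ with hc
    have hc0 : 0 ≤ c := by positivity
    have hg : Integrable ((Metric.closedBall x (lam + 2 * ε)).indicator
        (fun _ => c)) volume := by
      rw [integrable_indicator_iff measurableSet_closedBall]
      exact integrableOn_const measure_closedBall_lt_top.ne
    have hptw : ∀ v, ‖PsiDiff ψ x lam ε v * scaledTest η u δ v‖
        ≤ (Metric.closedBall x (lam + 2 * ε)).indicator (fun _ => c) v := by
      intro v
      by_cases hv : v ∈ Metric.closedBall x (lam + 2 * ε)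
      · rw [indicator_of_mem hv, Real.norm_eq_abs, abs_mul, hc]
        exact mul_le_mul (abs_psiDiff_le hlip hbd hlam hε x v)
          (abs_scaledTest_le hηbd hδ0 u v) (abs_nonneg _) (by positivity)
      · rw [indicator_of_notMem hv]
        rw [Metric.mem_closedBall, not_le] at hv
        rw [psiDiff_eq_zero hsupp hlam hε hv, zero_mul, norm_zero]
    have hle := norm_integral_le_of_norm_le hg (ae_of_all _ hptw)
    rw [Real.norm_eq_abs] at hle
    refine hle.trans ?_
    rw [integral_indicator_const _ measurableSet_closedBall]
    have hrad : 0 ≤ lam + 2 * ε := by positivity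
    have hvol : volume (Metric.closedBall x (lam + 2 * ε))
        = ENNReal.ofReal ((lam + 2 * ε) ^ 3) * volume (Metric.ball (0 : EuclideanSpace ℝ (Fin 3)) 1) := by
      rw [Measure.addHaar_closedBall volume x hrad, finrank_euclideanSpace_fin]
    have hballfin : volume (Metric.ball (0 : EuclideanSpace ℝ (Fin 3)) 1) ≠ ⊤ :=
      measure_ball_lt_top.ne
    have htoReal : (volume (Metric.closedBall x (lam + 2 * ε))).toReal
        = (lam + 2 * ε) ^ 3 * Vr := by
      rw [hvol, ENNReal.toReal_mul, ENNReal.toReal_ofReal (by positivity)]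
      rfl
    rw [smul_eq_mul, measureReal_def, htoReal]
    have hcube : (lam + 2 * ε) ^ 3 ≤ 27 * lam ^ 3 := by
      calc (lam + 2 * ε) ^ 3 ≤ (3 * lam) ^ 3 :=
            pow_le_pow_left₀ hrad (by linarith) 3
        _ = 27 * lam ^ 3 := by ring
    calc (lam + 2 * ε) ^ 3 * Vr * c ≤ 27 * lam ^ 3 * Vr * c := by
          refine mul_le_mul_of_nonneg_right (mul_le_mul_of_nonneg_right hcube hVr) hc0
      _ = 54 * Vr * ε * lam⁻¹ * (δ ^ 3)⁻¹ := by
          rw [hc]; field_simp; ring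
  · rw [indicator_of_notMem hu]
    rw [Metric.mem_closedBall, not_le] at hu
    have hzero : (fun v => PsiDiff ψ x lam ε v * scaledTest η u δ v)
        = fun _ => (0 : ℝ) := by
      funext v
      by_cases hv : v ∈ Metric.closedBall x (lam + 2 * ε)
      · rw [Metric.mem_closedBall] at hv
        have hvu : δ < dist v u := by
          have h1 : dist u x ≤ dist u v + dist v x := dist_triangle u v x
          rw [dist_comm u v] at h1
          linarith
        rw [scaledTest_eq_zero hηsupp hδ0 hvu, mul_zero]
      · rw [Metric.mem_closedBall, not_le] at hv
        rw [psiDiff_eq_zero hsupp hlam hε hv, zero_mul]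
    have h0 : (∫ v, PsiDiff ψ x lam ε v * scaledTest η u δ v) = 0 := by
      rw [hzero, integral_zero]
    rw [h0, abs_zero]


/-- Large-scale regime (`λ ≤ δ ≤ 1`) of the Besov `B^{1/2+κ̄}_{1,1}` bound
on `Ψ_ε^λ`: testing against rescaled test functions `η_u^δ` at scales `λ ≤ δ ≤ 1` yields a
total contribution of order `λ^{-1/2-κ} ε^{κ-2κ̄}`. -/
theorem besov_bound_large_scales :
    ∀ κ κb : ℝ, κ ∈ Ioo (0 : ℝ) (1 / 2) → κb ∈ Ioo (0 : ℝ) (κ / 2) →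
      ∃ C : ℝ, 0 < C ∧
        ∀ (x : EuclideanSpace ℝ (Fin 3)) (ε lam : ℝ), 0 < ε → ε ≤ lam → lam ≤ 1 →
          ∀ ψ : EuclideanSpace ℝ (Fin 3) → ℝ,
            LipschitzWith 1 ψ → (∀ z, |ψ z| ≤ 1) →
            Function.support ψ ⊆ Metric.closedBall 0 1 →
            (∫⁻ δ in Ioc lam (1 : ℝ), ∫⁻ u : EuclideanSpace ℝ (Fin 3),
                ENNReal.ofReal (δ ^ (-(3 : ℝ) / 2 - κb) *
                  ⨆ η ∈ testSet, |∫ v, PsiDiff ψ x lam ε v * scaledTest η u δ v|))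
              ≤ ENNReal.ofReal (C * lam ^ (-(1 : ℝ) / 2 - κ) * ε ^ (κ - 2 * κb)) := by

  intro κ κb hκ hκb
  obtain ⟨hκ0, hκ2⟩ := hκ
  obtain ⟨hκb0, hκbκ⟩ := hκb
  have hVr0 : 0 < Vr :=
    ENNReal.toReal_pos (Metric.measure_ball_pos volume 0 one_pos).ne' measure_ball_lt_top.ne
  refine ⟨2 * (3456 * Vr ^ 2), by positivity, ?_⟩
  intro x ε lam hε hεlam hlam1 ψ hlip hbd hsupp
  have hlam : 0 < lam := lt_of_lt_of_le hε hεlam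
  have hε1 : ε ≤ 1 := hεlam.trans hlam1
  set p : ℝ := -(3 : ℝ) / 2 - κb with hp
  set A : ℝ := 3456 * Vr ^ 2 with hA
  have hA0 : 0 < A := by positivity
  set cA : ℝ := A * ε * lam⁻¹ with hcA
  have hcA0 : 0 < cA := by positivity
  -- Step 1: bound the inner integral for each δ
  have step1 : ∀ δ ∈ Ioc lam (1 : ℝ),
      (∫⁻ u : EuclideanSpace ℝ (Fin 3),
          ENNReal.ofReal (δ ^ p *
            ⨆ η ∈ testSet, |∫ v, PsiDiff ψ x lam ε v * scaledTest η u δ v|))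
        ≤ ENNReal.ofReal (cA * δ ^ p) := by
    intro δ hδmem
    obtain ⟨hδl, hδ1⟩ := hδmem
    have hδ0 : 0 < δ := hlam.trans hδl
    have hδp : 0 ≤ δ ^ p := Real.rpow_nonneg hδ0.le p
    set M : ℝ := 54 * Vr * ε * lam⁻¹ * (δ ^ 3)⁻¹ with hM
    have hM0 : 0 ≤ M := by positivity
    have hptw : ∀ u : EuclideanSpace ℝ (Fin 3),
        ENNReal.ofReal (δ ^ p *
            ⨆ η ∈ testSet, |∫ v, PsiDiff ψ x lam ε v * scaledTest η u δ v|)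
          ≤ (Metric.closedBall x (4 * δ)).indicator
              (fun _ => ENNReal.ofReal (δ ^ p * M)) u := by
      intro u
      have hS := sup_bound hlip hbd hsupp hε hεlam hδl.le hδ1 x u
      by_cases hu : u ∈ Metric.closedBall x (4 * δ)
      · rw [indicator_of_mem hu]
        rw [indicator_of_mem hu] at hS
        exact ENNReal.ofReal_le_ofReal (mul_le_mul_of_nonneg_left hS hδp)
      · rw [indicator_of_notMem hu]
        rw [indicator_of_notMem hu] at hS
        have h0 : δ ^ p * (⨆ η ∈ testSet,
            |∫ v, PsiDiff ψ x lam ε v * scaledTest η u δ v|) ≤ 0 :=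
          mul_nonpos_of_nonneg_of_nonpos hδp hS
        rw [ENNReal.ofReal_eq_zero.2 h0]
    have hb : volume (Metric.ball (0 : EuclideanSpace ℝ (Fin 3)) 1) = ENNReal.ofReal Vr :=
      (ENNReal.ofReal_toReal measure_ball_lt_top.ne).symm
    calc (∫⁻ u : EuclideanSpace ℝ (Fin 3),
            ENNReal.ofReal (δ ^ p *
              ⨆ η ∈ testSet, |∫ v, PsiDiff ψ x lam ε v * scaledTest η u δ v|))
        ≤ ∫⁻ u, (Metric.closedBall x (4 * δ)).indicator
              (fun _ => ENNReal.ofReal (δ ^ p * M)) u := lintegral_mono hptw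
      _ = ENNReal.ofReal (δ ^ p * M) * volume (Metric.closedBall x (4 * δ)) := by
          rw [lintegral_indicator measurableSet_closedBall, setLIntegral_const]
      _ ≤ ENNReal.ofReal (cA * δ ^ p) := by
          rw [Measure.addHaar_closedBall volume x (by positivity : (0:ℝ) ≤ 4 * δ),
            finrank_euclideanSpace_fin, hb,
            ← ENNReal.ofReal_mul (by positivity : (0:ℝ) ≤ (4 * δ) ^ 3),
            ← ENNReal.ofReal_mul (by positivity : (0:ℝ) ≤ δ ^ p * M)]
          refine ENNReal.ofReal_le_ofReal (le_of_eq ?_)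
          rw [hM, hcA, hA]
          field_simp
          ring
  -- Step 2: integrate in δ
  have hmeas : Measurable fun δ : ℝ => ENNReal.ofReal (cA * δ ^ p) := by fun_prop
  have hIoc : IntegrableOn (fun δ : ℝ => cA * δ ^ p) (Ioc lam (1 : ℝ)) := by
    refine (ContinuousOn.integrableOn_compact isCompact_Icc ?_).mono_set Ioc_subset_Icc_self
    exact continuousOn_const.mul (ContinuousOn.rpow_const continuousOn_id
      (fun δ hδmem => Or.inl (ne_of_gt (lt_of_lt_of_le hlam hδmem.1))))
  have hposae : 0 ≤ᵐ[volume.restrict (Ioc lam (1:ℝ))] fun δ : ℝ => cA * δ ^ p := by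
    refine (ae_restrict_iff' measurableSet_Ioc).2 (ae_of_all _ fun δ hδmem => ?_)
    have hδ0 : (0:ℝ) < δ := hlam.trans hδmem.1
    positivity
  have hL := ofReal_integral_eq_lintegral_ofReal hIoc hposae
  have hp1 : p + 1 = -(1:ℝ)/2 - κb := by rw [hp]; ring
  have hq : -(1:ℝ)/2 - κb < 0 := by linarith
  have hL0 : 0 ≤ lam ^ (-(1:ℝ)/2 - κb) := Real.rpow_nonneg hlam.le _
  have hval : (∫ δ in Ioc lam (1:ℝ), cA * δ ^ p) ≤ cA * (2 * lam ^ (-(1:ℝ)/2 - κb)) := by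
    rw [MeasureTheory.integral_const_mul]
    refine mul_le_mul_of_nonneg_left ?_ hcA0.le
    rw [← intervalIntegral.integral_of_le hlam1,
      integral_rpow (Or.inr ⟨by rw [hp]; intro h; nlinarith [hκb0],
        by rw [uIcc_of_le hlam1]; exact fun h => absurd h.1 (by linarith)⟩),
      hp1, Real.one_rpow]
    rw [div_le_iff_of_neg hq]
    nlinarith [hL0]
  -- Step 3: algebraic comparison of exponents
  have key : ε * lam ^ (-(3:ℝ)/2 - κb) ≤ lam ^ (-(1:ℝ)/2 - κ) * ε ^ (κ - 2*κb) := by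
    have h1 : ε = ε ^ ((1:ℝ) - κ + 2*κb) * ε ^ (κ - 2*κb) := by
      rw [← Real.rpow_add hε, show (1:ℝ) - κ + 2*κb + (κ - 2*κb) = 1 by ring, Real.rpow_one]
    have h2 : lam ^ (-(1:ℝ)/2 - κ) = lam ^ ((1:ℝ) + κb - κ) * lam ^ (-(3:ℝ)/2 - κb) := by
      rw [← Real.rpow_add hlam]; congr 1; ring
    have h3 : ε ^ ((1:ℝ) - κ + 2*κb) ≤ lam ^ ((1:ℝ) + κb - κ) := by
      rw [show (1:ℝ) - κ + 2*κb = ((1:ℝ) + κb - κ) + κb by ring, Real.rpow_add hε]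
      calc ε ^ ((1:ℝ) + κb - κ) * ε ^ κb ≤ lam ^ ((1:ℝ) + κb - κ) * 1 :=
            mul_le_mul (Real.rpow_le_rpow hε.le hεlam (by linarith))
              (Real.rpow_le_one hε.le hε1 hκb0.le) (Real.rpow_nonneg hε.le _)
              (Real.rpow_nonneg hlam.le _)
        _ = lam ^ ((1:ℝ) + κb - κ) := mul_one _
    calc ε * lam ^ (-(3:ℝ)/2 - κb)
        = ε ^ ((1:ℝ) - κ + 2*κb) * ε ^ (κ - 2*κb) * lam ^ (-(3:ℝ)/2 - κb) := by
          rw [← h1]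
      _ ≤ lam ^ ((1:ℝ) + κb - κ) * ε ^ (κ - 2*κb) * lam ^ (-(3:ℝ)/2 - κb) :=
          mul_le_mul_of_nonneg_right (mul_le_mul_of_nonneg_right h3
            (Real.rpow_nonneg hε.le _)) (Real.rpow_nonneg hlam.le _)
      _ = lam ^ (-(1:ℝ)/2 - κ) * ε ^ (κ - 2*κb) := by rw [h2]; ring
  have final : cA * (2 * lam ^ (-(1:ℝ)/2 - κb))
      ≤ 2 * (3456 * Vr ^ 2) * lam ^ (-(1:ℝ)/2 - κ) * ε ^ (κ - 2*κb) := by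
    have e1 : lam⁻¹ * lam ^ (-(1:ℝ)/2 - κb) = lam ^ (-(3:ℝ)/2 - κb) := by
      rw [← Real.rpow_neg_one lam, ← Real.rpow_add hlam]; congr 1; ring
    calc cA * (2 * lam ^ (-(1:ℝ)/2 - κb))
        = 2 * A * (ε * (lam⁻¹ * lam ^ (-(1:ℝ)/2 - κb))) := by rw [hcA]; ring
      _ = 2 * A * (ε * lam ^ (-(3:ℝ)/2 - κb)) := by rw [e1]
      _ ≤ 2 * A * (lam ^ (-(1:ℝ)/2 - κ) * ε ^ (κ - 2*κb)) :=
          mul_le_mul_of_nonneg_left key (by positivity)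
      _ = 2 * (3456 * Vr ^ 2) * lam ^ (-(1:ℝ)/2 - κ) * ε ^ (κ - 2*κb) := by
          rw [hA]; ring
  calc (∫⁻ δ in Ioc lam (1 : ℝ), ∫⁻ u : EuclideanSpace ℝ (Fin 3),
          ENNReal.ofReal (δ ^ p *
            ⨆ η ∈ testSet, |∫ v, PsiDiff ψ x lam ε v * scaledTest η u δ v|))
      ≤ ∫⁻ δ in Ioc lam (1:ℝ), ENNReal.ofReal (cA * δ ^ p) := setLIntegral_mono hmeas step1
    _ = ENNReal.ofReal (∫ δ in Ioc lam (1:ℝ), cA * δ ^ p) := hL.symm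
    _ ≤ ENNReal.ofReal (cA * (2 * lam ^ (-(1:ℝ)/2 - κb))) := ENNReal.ofReal_le_ofReal hval
    _ ≤ ENNReal.ofReal (2 * (3456 * Vr ^ 2) * lam ^ (-(1:ℝ)/2 - κ) * ε ^ (κ - 2*κb)) :=
        ENNReal.ofReal_le_ofReal final
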